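/- CVaR as average of VaR: for α ∈ (0,1) and integrable X, CVaR_α(X) = (1/α) ∫₀^α VaR_γ(X) dγ, where VaR_γ(X) = inf{c ∈ ℝ : P(X + c < 0) ≤ γ} and CVaR_α(X) = inf_η {(1/α)E[(η-X)^+] - η}. -/

import Mathlib

open MeasureTheory Real Set
open scoped ENNReal

namespace CVaRAux

variable {Ω : Type*} [MeasurableSpace Ω]

noncomputable def F (μ : Measure Ω) (X : Ω → ℝ) (t : ℝ) : ℝ := (μ {ω | X ω < t}).toReal

noncomputable def q (μ : Measure Ω) (X : Ω → ℝ) (γ : ℝ) : ℝ := sSup {t | F μ X t ≤ γ}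

lemma nu_mono (μ : Measure Ω) (X : Ω → ℝ) : Monotone (fun t => μ {ω | X ω < t}) :=
  fun _ _ hst => measure_mono (μ:=μ) (fun ω hω => lt_of_lt_of_le hω hst)

lemma F_mono (μ : Measure Ω) [IsProbabilityMeasure μ] (X : Ω → ℝ) : Monotone (F μ X) := fun s t hst =>
  ENNReal.toReal_mono (measure_ne_top μ _) (nu_mono μ X hst)

lemma F_nonneg (μ : Measure Ω) (X : Ω → ℝ) (t : ℝ) : 0 ≤ F μ X t := ENNReal.toReal_nonneg

lemma S_nonempty (μ : Measure Ω) [IsProbabilityMeasure μ] {X : Ω → ℝ}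
    (hXint : Integrable X μ) {γ : ℝ} (hγ : 0 < γ) : {t | F μ X t ≤ γ}.Nonempty := by
  set B : ℝ := ∫ ω, |X ω| ∂μ with hB
  have hB0 : 0 ≤ B := integral_nonneg (fun ω => abs_nonneg _)
  set t : ℝ := -(B / γ + 1) with ht
  have htneg : 0 < B / γ + 1 := by positivity
  refine ⟨t, ?_⟩
  have h1 : μ {ω | X ω < t} ≤ μ {ω | B / γ + 1 ≤ |X ω|} := by
    apply measure_mono
    intro ω hω
    simp only [mem_setOf_eq] at hω ⊢
    have : X ω < -(B / γ + 1) := hω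
    calc B / γ + 1 ≤ -(X ω) := by linarith
    _ ≤ |X ω| := by rw [abs_eq_max_neg]; exact le_max_right _ _
  have markov := mul_meas_ge_le_integral_of_nonneg (μ := μ)
    (f := fun ω => |X ω|) (Filter.Eventually.of_forall fun ω => abs_nonneg _) hXint.abs (B / γ + 1)
  have h2 : (μ {ω | X ω < t}).toReal ≤ (μ {ω | B / γ + 1 ≤ |X ω|}).toReal :=
    ENNReal.toReal_mono (measure_ne_top μ _) h1
  have h3 : (B / γ + 1) * (μ {ω | B / γ + 1 ≤ |X ω|}).toReal ≤ B := markov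
  have h4 : (μ {ω | B / γ + 1 ≤ |X ω|}).toReal ≤ B / (B / γ + 1) := by
    rw [le_div_iff₀ htneg]; linarith [h3]
  have h5 : B / (B / γ + 1) ≤ γ := by
    rw [div_le_iff₀ htneg]
    have : γ * (B / γ) = B := by field_simp
    nlinarith [hγ]
  exact le_trans h2 (le_trans h4 h5)

lemma F_gt (μ : Measure Ω) [IsProbabilityMeasure μ] {X : Ω → ℝ}
    (hX : Measurable X) (hXint : Integrable X μ) {γ : ℝ} (hγ1 : γ < 1) {t : ℝ}
    (h : (∫ ω, |X ω| ∂μ) / (1 - γ) < t) : γ < F μ X t := by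
  set B : ℝ := ∫ ω, |X ω| ∂μ with hB
  have hB0 : 0 ≤ B := integral_nonneg (fun ω => abs_nonneg _)
  have hγ' : 0 < 1 - γ := by linarith
  have ht0 : 0 < t := lt_of_le_of_lt (by positivity) h
  have hcompl : {ω | X ω < t}ᶜ = {ω | t ≤ X ω} := by
    ext ω; simp [not_lt]
  have h1 : μ {ω | t ≤ X ω} ≤ μ {ω | t ≤ |X ω|} :=
    measure_mono (fun ω hω => show _ ≤ |X ω| from le_trans hω (le_abs_self _))
  have markov := mul_meas_ge_le_integral_of_nonneg (μ := μ)
    (f := fun ω => |X ω|) (Filter.Eventually.of_forall fun ω => abs_nonneg _) hXint.abs t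
  have h2 : (μ {ω | t ≤ X ω}).toReal ≤ B / t := by
    rw [le_div_iff₀ ht0]
    calc (μ {ω | t ≤ X ω}).toReal * t ≤ (μ {ω | t ≤ |X ω|}).toReal * t :=
          mul_le_mul_of_nonneg_right (ENNReal.toReal_mono (measure_ne_top μ _) h1) ht0.le
    _ = t * (μ {ω | t ≤ |X ω|}).toReal := mul_comm _ _
    _ ≤ B := markov
  have h3 : B / t < 1 - γ := by
    rw [div_lt_iff₀ ht0]
    have := (div_lt_iff₀ hγ').mp h
    nlinarith
  have hmeas : MeasurableSet {ω | X ω < t} := hX measurableSet_Iio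
  have h4 : F μ X t = 1 - (μ {ω | t ≤ X ω}).toReal := by
    have hsum : (μ {ω | X ω < t}).toReal + (μ {ω | t ≤ X ω}).toReal = 1 := by
      rw [← ENNReal.toReal_add (measure_ne_top μ _) (measure_ne_top μ _), ← hcompl,
        measure_add_measure_compl hmeas, measure_univ, ENNReal.toReal_one]
    rw [F]; linarith
  rw [h4]; linarith [lt_of_le_of_lt h2 h3]

lemma S_bddAbove (μ : Measure Ω) [IsProbabilityMeasure μ] {X : Ω → ℝ}
    (hX : Measurable X) (hXint : Integrable X μ) {γ : ℝ} (hγ1 : γ < 1) :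
    BddAbove {t | F μ X t ≤ γ} := by
  refine ⟨(∫ ω, |X ω| ∂μ) / (1 - γ) + 1, fun s hs => ?_⟩
  by_contra hc
  push_neg at hc
  have := F_gt μ hX hXint hγ1 (t := s) (by linarith)
  exact absurd hs (by simp only [mem_setOf_eq]; linarith)

variable (μ : Measure Ω) [IsProbabilityMeasure μ] {X : Ω → ℝ}

lemma le_q (hXint : Integrable X μ) {γ t : ℝ} (hX : Measurable X) (hγ1 : γ < 1)
    (h : F μ X t ≤ γ) : t ≤ q μ X γ :=
  le_csSup (S_bddAbove μ hX hXint hγ1) h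

lemma F_le_of_lt_q (hXint : Integrable X μ) {γ t : ℝ} (hγ0 : 0 < γ)
    (h : t < q μ X γ) : F μ X t ≤ γ := by
  obtain ⟨s, hs, hts⟩ := exists_lt_of_lt_csSup (S_nonempty μ hXint hγ0) h
  exact le_trans (F_mono μ X hts.le) hs

lemma lt_F_of_q_lt (hXint : Integrable X μ) {γ t : ℝ} (hX : Measurable X) (hγ1 : γ < 1)
    (h : q μ X γ < t) : γ < F μ X t := by
  by_contra hc
  push_neg at hc
  exact absurd (le_q μ hXint hX hγ1 hc) (not_le.mpr h)

lemma q_mono (hXint : Integrable X μ) (hX : Measurable X) {γ₁ γ₂ : ℝ}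
    (h0 : 0 < γ₁) (h1 : γ₂ < 1) (h : γ₁ ≤ γ₂) : q μ X γ₁ ≤ q μ X γ₂ :=
  csSup_le_csSup (S_bddAbove μ hX hXint h1) (S_nonempty μ hXint h0)
    (fun t ht => le_trans ht h)

/-- Layercake: `∫⁻ (η - X)⁺ ∂μ = ∫⁻ t in Iio η, μ {X < t}`. -/
lemma layercake (hX : Measurable X) (η : ℝ) :
    ∫⁻ ω, ENNReal.ofReal (max (η - X ω) 0) ∂μ = ∫⁻ t in Iio η, μ {ω | X ω < t} := by
  have h1 := lintegral_eq_lintegral_meas_lt μ (f := fun ω => max (η - X ω) 0)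
    (Filter.Eventually.of_forall fun ω => le_max_right _ _)
    (((measurable_const.sub hX).max measurable_const).aemeasurable)
  rw [h1]
  have h2 : ∀ t ∈ Ioi (0:ℝ), μ {a | t < max (η - X a) 0} = μ {ω | X ω < η - t} := by
    intro t ht
    congr 1
    ext a
    simp only [mem_setOf_eq, lt_max_iff, mem_Ioi] at *
    constructor
    · rintro (h | h)
      · linarith
      · linarith
    · intro h; left; linarith
  rw [setLIntegral_congr_fun measurableSet_Ioi h2]
  have hν : Measurable (fun t => μ {ω | X ω < t}) := (nu_mono μ X).measurable
  have key : ∀ t : ℝ, (Ioi (0:ℝ)).indicator (fun t => μ {ω | X ω < η - t}) t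
      = (Iio η).indicator (fun s => μ {ω | X ω < s}) (η - t) := by
    intro t
    by_cases h : 0 < t
    · rw [indicator_of_mem (mem_Ioi.mpr h), indicator_of_mem (by simp only [mem_Iio]; linarith)]
    · rw [indicator_of_notMem (by simpa using h),
        indicator_of_notMem (by simp only [mem_Iio, not_lt] at *; linarith)]
  calc ∫⁻ t in Ioi 0, μ {ω | X ω < η - t}
      = ∫⁻ t, (Ioi (0:ℝ)).indicator (fun t => μ {ω | X ω < η - t}) t := by
        rw [lintegral_indicator measurableSet_Ioi]
    _ = ∫⁻ t, (Iio η).indicator (fun s => μ {ω | X ω < s}) (η - t) := by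
        simp_rw [key]
    _ = ∫⁻ s, (Iio η).indicator (fun s => μ {ω | X ω < s}) s :=
        (Measure.measurePreserving_sub_left volume η).lintegral_comp
          (hν.indicator measurableSet_Iio)
    _ = ∫⁻ t in Iio η, μ {ω | X ω < t} := by rw [lintegral_indicator measurableSet_Iio]

lemma maxint (hXint : Integrable X μ) (η : ℝ) :
    Integrable (fun ω => max (η - X ω) 0) μ :=
  ((integrable_const η).sub hXint).pos_part

lemma lintegral_lt_top (hX : Measurable X) (hXint : Integrable X μ) (η : ℝ) :
    ∫⁻ t in Iio η, μ {ω | X ω < t} < ⊤ := by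
  rw [← layercake μ hX η]
  exact (maxint μ hXint η).lintegral_lt_top

lemma F_integrableOn (hX : Measurable X) (hXint : Integrable X μ) (η : ℝ) :
    IntegrableOn (F μ X) (Iio η) volume := by
  have hFmeas : Measurable (F μ X) := ((nu_mono μ X).measurable).ennreal_toReal
  refine ⟨hFmeas.aestronglyMeasurable, ?_⟩
  rw [hasFiniteIntegral_iff_norm]
  have : ∀ t : ℝ, ENNReal.ofReal ‖F μ X t‖ = μ {ω | X ω < t} := by
    intro t
    rw [norm_of_nonneg (F_nonneg μ X t), F, ENNReal.ofReal_toReal (measure_ne_top μ _)]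
  simp_rw [this]
  exact lintegral_lt_top μ hX hXint η

lemma phi_eq (hX : Measurable X) (hXint : Integrable X μ) (η : ℝ) :
    ∫ ω, max (η - X ω) 0 ∂μ = ∫ t in Iio η, F μ X t := by
  rw [integral_eq_lintegral_of_nonneg_ae (f := fun ω => max (η - X ω) 0)
    (Filter.Eventually.of_forall fun ω => le_max_right _ _)
    (maxint μ hXint η).aestronglyMeasurable,
    integral_eq_lintegral_of_nonneg_ae (f := F μ X)
      (Filter.Eventually.of_forall fun t => F_nonneg μ X t)
      (((nu_mono μ X).measurable).ennreal_toReal.aestronglyMeasurable),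
    layercake μ hX η]
  congr 1
  refine setLIntegral_congr_fun measurableSet_Iio (fun t _ => ?_)
  rw [F, ENNReal.ofReal_toReal (measure_ne_top μ _)]

lemma phi_min (hX : Measurable X) (hXint : Integrable X μ) {α : ℝ} (hα0 : 0 < α) (hα1 : α < 1)
    (η : ℝ) :
    (∫ ω, max (q μ X α - X ω) 0 ∂μ) + α * (η - q μ X α) ≤ ∫ ω, max (η - X ω) 0 ∂μ := by
  set qa := q μ X α with hqa
  rw [phi_eq μ hX hXint, phi_eq μ hX hXint]
  have hdisj : ∀ a b : ℝ, Disjoint (Iio a) (Ico a b) :=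
    fun a b => disjoint_left.mpr (fun t ht ht' => absurd ht' (by simp [mem_Iio.mp ht, not_le.mpr]))
  rcases le_or_gt qa η with h | h
  · have hsplit : ∫ t in Iio η, F μ X t
        = (∫ t in Iio qa, F μ X t) + ∫ t in Ico qa η, F μ X t := by
      rw [← setIntegral_union (hdisj qa η) measurableSet_Ico
        ((F_integrableOn μ hX hXint η).mono_set (Iio_subset_Iio h))
        ((F_integrableOn μ hX hXint η).mono_set Ico_subset_Iio_self),
        Iio_union_Ico_eq_Iio h]
    have hb : α * (η - qa) ≤ ∫ t in Ico qa η, F μ X t := by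
      rw [integral_Ico_eq_integral_Ioo]
      have h1 : ∫ t in Ioo qa η, (fun _ => α) t = α * (η - qa) := by
        rw [setIntegral_const, measureReal_def, Real.volume_Ioo, ENNReal.toReal_ofReal (by linarith)]
        rw [smul_eq_mul]; ring
      rw [← h1]
      refine setIntegral_mono_on ((integrableOn_const_iff (C := α)).mpr (Or.inr ?_))
        ((F_integrableOn μ hX hXint η).mono_set (Ioo_subset_Iio_self)) measurableSet_Ioo ?_
      · rw [Real.volume_Ioo]; exact ENNReal.ofReal_lt_top
      · exact fun t ht => (lt_F_of_q_lt μ hXint hX hα1 ht.1).le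
    rw [hsplit]; linarith
  · have hsplit : ∫ t in Iio qa, F μ X t
        = (∫ t in Iio η, F μ X t) + ∫ t in Ico η qa, F μ X t := by
      rw [← setIntegral_union (hdisj η qa) measurableSet_Ico
        ((F_integrableOn μ hX hXint qa).mono_set (Iio_subset_Iio h.le))
        ((F_integrableOn μ hX hXint qa).mono_set Ico_subset_Iio_self),
        Iio_union_Ico_eq_Iio h.le]
    have hb : ∫ t in Ico η qa, F μ X t ≤ α * (qa - η) := by
      rw [integral_Ico_eq_integral_Ioo]
      have h1 : ∫ t in Ioo η qa, (fun _ => α) t = α * (qa - η) := by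
        rw [setIntegral_const, measureReal_def, Real.volume_Ioo, ENNReal.toReal_ofReal (by linarith)]
        rw [smul_eq_mul]; ring
      rw [← h1]
      refine setIntegral_mono_on
        ((F_integrableOn μ hX hXint qa).mono_set (Ioo_subset_Iio_self))
        ((integrableOn_const_iff (C := α)).mpr (Or.inr ?_)) measurableSet_Ioo ?_
      · rw [Real.volume_Ioo]; exact ENNReal.ofReal_lt_top
      · exact fun t ht => F_le_of_lt_q μ hXint hα0 ht.2
    rw [hsplit]; linarith

lemma fubini (hX : Measurable X) (hXint : Integrable X μ) {α : ℝ} (hα0 : 0 < α) (hα1 : α < 1) :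
    ∫⁻ γ in Ioo 0 α, ENNReal.ofReal (q μ X α - q μ X γ)
      = ∫⁻ t in Iio (q μ X α), μ {ω | X ω < t} := by
  set qa := q μ X α with hqa
  -- measurable version of q on (0, α)
  have hqmono : MonotoneOn (q μ X) (Ioo 0 α) := fun γ₁ h1 γ₂ h2 h12 =>
    q_mono μ hXint hX h1.1 (lt_trans h2.2 hα1) h12
  have hqae : AEMeasurable (q μ X) (volume.restrict (Ioo 0 α)) :=
    aemeasurable_restrict_of_monotoneOn measurableSet_Ioo hqmono
  set Q := hqae.mk (q μ X) with hQ
  have hQm : Measurable Q := hqae.measurable_mk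
  have hQae : q μ X =ᵐ[volume.restrict (Ioo 0 α)] Q := hqae.ae_eq_mk
  -- the product set
  set S : Set (ℝ × ℝ) := {p | Q p.1 ≤ p.2 ∧ p.2 < qa} with hS
  have hSmeas : MeasurableSet S :=
    (measurableSet_le (hQm.comp measurable_fst) measurable_snd).inter
      (measurable_snd measurableSet_Iio)
  set g : ℝ × ℝ → ℝ≥0∞ := S.indicator (1 : ℝ × ℝ → ℝ≥0∞) with hg
  have hgm : Measurable g := measurable_one.indicator hSmeas
  -- step 1: replace q by Q
  have step1 : ∫⁻ γ in Ioo 0 α, ENNReal.ofReal (qa - q μ X γ)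
      = ∫⁻ γ in Ioo 0 α, ENNReal.ofReal (qa - Q γ) :=
    lintegral_congr_ae (hQae.mono fun γ h => by dsimp only; rw [h])
  -- step 2: inner layer
  have step2 : ∀ γ : ℝ, ENNReal.ofReal (qa - Q γ) = ∫⁻ t, g (γ, t) := by
    intro γ
    have h1 : ∫⁻ t, g (γ, t) = ∫⁻ t, (Ico (Q γ) qa).indicator (1 : ℝ → ℝ≥0∞) t := by
      apply lintegral_congr
      intro t
      by_cases h : Q γ ≤ t ∧ t < qa
      · rw [hg, indicator_of_mem (by exact h), indicator_of_mem (by exact h)]; rfl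
      · rw [hg, indicator_of_notMem (by exact h), indicator_of_notMem (by exact h)]
    rw [h1, lintegral_indicator_one measurableSet_Ico, Real.volume_Ico]
  -- step 3: swap
  have hswap : ∫⁻ γ in Ioo 0 α, (∫⁻ t, g (γ, t))
      = ∫⁻ t, ∫⁻ γ in Ioo 0 α, g (γ, t) := by
    apply lintegral_lintegral_swap
    exact (hgm.comp (measurable_fst.prodMk measurable_snd)).aemeasurable
  -- step 4: compute slice measures a.e.
  set c : ℝ → ℝ := fun t => min (F μ X t) α with hc
  have hcmono : Monotone c := fun s t hst => min_le_min (F_mono μ X hst) le_rfl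
  have hcae : ∀ᵐ t : ℝ, ContinuousAt c t := by
    rw [ae_iff]
    exact Set.Countable.measure_zero hcmono.countable_not_continuousAt _
  have step4 : (fun t => ∫⁻ γ in Ioo 0 α, g (γ, t))
      =ᵐ[volume] (Iio qa).indicator (fun t => μ {ω | X ω < t}) := by
    filter_upwards [hcae] with t hct
    have hslice : ∫⁻ γ in Ioo 0 α, g (γ, t)
        = (volume.restrict (Ioo 0 α)) {γ | Q γ ≤ t ∧ t < qa} := by
      have : ∀ γ : ℝ, g (γ, t) = Set.indicator {γ | Q γ ≤ t ∧ t < qa} (1 : ℝ → ℝ≥0∞) γ := by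
        intro γ
        by_cases h : Q γ ≤ t ∧ t < qa
        · rw [hg, indicator_of_mem (by exact h), indicator_of_mem (by exact h)]; rfl
        · rw [hg, indicator_of_notMem (by exact h), indicator_of_notMem (by exact h)]
      simp_rw [this]
      by_cases h : t < qa
      · have hset : {γ | Q γ ≤ t ∧ t < qa} = {γ | Q γ ≤ t} := by ext γ; simp [h]
        rw [hset, lintegral_indicator_one (show MeasurableSet {γ : ℝ | Q γ ≤ t} from hQm measurableSet_Iic)]
      · have hset : {γ | Q γ ≤ t ∧ t < qa} = (∅ : Set ℝ) := by ext γ; simp [h]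
        rw [hset]; simp
    rw [hslice]
    by_cases h : t < qa
    · have hset : {γ | Q γ ≤ t ∧ t < qa} = {γ | Q γ ≤ t} := by ext γ; simp [h]
      rw [hset, indicator_of_mem (mem_Iio.mpr h)]
      have hcongr : (volume.restrict (Ioo 0 α)) {γ | Q γ ≤ t}
          = (volume.restrict (Ioo 0 α)) {γ | q μ X γ ≤ t} := by
        refine measure_congr ?_
        refine Filter.eventuallyEq_set.mpr (hQae.mono fun γ hγ => ?_)
        simp only [mem_setOf_eq, hγ]
      rw [hcongr, Measure.restrict_apply' measurableSet_Ioo]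
      -- squeeze
      have hFt : F μ X t ≤ α := F_le_of_lt_q μ hXint hα0 h
      have hct_eq : c t = F μ X t := min_eq_left hFt
      have hlow : ENNReal.ofReal (c t) ≤ volume ({γ | q μ X γ ≤ t} ∩ Ioo 0 α) := by
        have hsub : Ioo 0 (c t) ⊆ {γ | q μ X γ ≤ t} ∩ Ioo 0 α := by
          intro γ hγ
          have hγF : γ < F μ X t := lt_of_lt_of_le hγ.2 (min_le_left _ _)
          have hγα : γ < α := lt_of_lt_of_le hγ.2 (min_le_right _ _)
          refine ⟨?_, hγ.1, hγα⟩
          refine csSup_le (S_nonempty μ hXint hγ.1) (fun s hs => ?_)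
          by_contra hc'
          push_neg at hc'
          exact absurd (le_trans (F_mono μ X hc'.le) hs) (not_le.mpr hγF)
        calc ENNReal.ofReal (c t) = volume (Ioo 0 (c t)) := by rw [Real.volume_Ioo, sub_zero]
        _ ≤ _ := measure_mono hsub
      have hup : ∀ s : ℝ, t < s → volume ({γ | q μ X γ ≤ t} ∩ Ioo 0 α)
          ≤ ENNReal.ofReal (c s) := by
        intro s hs
        have hsub : {γ | q μ X γ ≤ t} ∩ Ioo 0 α ⊆ Ioc 0 (c s) := by
          rintro γ ⟨hγq, hγ0, hγα⟩
          refine ⟨hγ0, le_min ?_ hγα.le⟩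
          by_contra hc'
          push_neg at hc'
          have : s ≤ q μ X γ := le_q μ hXint hX (lt_trans hγα hα1) hc'.le
          exact absurd (le_trans this hγq) (not_le.mpr hs)
        calc volume ({γ | q μ X γ ≤ t} ∩ Ioo 0 α) ≤ volume (Ioc 0 (c s)) := measure_mono hsub
        _ = ENNReal.ofReal (c s) := by rw [Real.volume_Ioc, sub_zero]
      have hup' : volume ({γ | q μ X γ ≤ t} ∩ Ioo 0 α) ≤ ENNReal.ofReal (c t) := by
        have hseq : Filter.Tendsto (fun n : ℕ => t + ((n : ℝ) + 1)⁻¹) Filter.atTop (nhds t) := by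
          have : Filter.Tendsto (fun n : ℕ => ((n : ℝ) + 1)⁻¹) Filter.atTop (nhds 0) :=
            tendsto_one_div_add_atTop_nhds_zero_nat.congr (fun n => by rw [one_div])
          simpa using Filter.Tendsto.const_add t this
        have hlim : Filter.Tendsto (fun n : ℕ => ENNReal.ofReal (c (t + ((n : ℝ) + 1)⁻¹)))
            Filter.atTop (nhds (ENNReal.ofReal (c t))) :=
          (ENNReal.continuous_ofReal.continuousAt.tendsto.comp (hct.tendsto.comp hseq))
        refine ge_of_tendsto' hlim (fun n => hup _ ?_)
        have : (0:ℝ) < ((n : ℝ) + 1)⁻¹ := by positivity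
        linarith
      have := le_antisymm hup' hlow
      rw [this, hct_eq, F, ENNReal.ofReal_toReal (measure_ne_top μ _)]
    · have hset : {γ | Q γ ≤ t ∧ t < qa} = (∅ : Set ℝ) := by ext γ; simp [h]
      rw [hset, indicator_of_notMem (by simpa using h)]
      simp
  calc ∫⁻ γ in Ioo 0 α, ENNReal.ofReal (qa - q μ X γ)
      = ∫⁻ γ in Ioo 0 α, ENNReal.ofReal (qa - Q γ) := step1
    _ = ∫⁻ γ in Ioo 0 α, (∫⁻ t, g (γ, t)) := by simp_rw [step2]
    _ = ∫⁻ t, ∫⁻ γ in Ioo 0 α, g (γ, t) := hswap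
    _ = ∫⁻ t, (Iio qa).indicator (fun t => μ {ω | X ω < t}) t := lintegral_congr_ae step4
    _ = ∫⁻ t in Iio qa, μ {ω | X ω < t} := by rw [lintegral_indicator measurableSet_Iio]

end CVaRAux

open CVaRAux in
/-- CVaR as an average of VaR: for `α ∈ (0,1)` and integrable `X`,
`CVaR_α(X) = (1/α) ∫₀^α VaR_γ(X) dγ`, where
`VaR_γ(X) = inf {c : P(X + c < 0) ≤ γ}` and
`CVaR_α(X) = inf_η {(1/α) E[(η - X)⁺] - η}`. -/
theorem cvar_integral_of_var
    {Ω : Type*} [MeasurableSpace Ω] (μ : Measure Ω) [IsProbabilityMeasure μ]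
    (X : Ω → ℝ) (hX : Measurable X) (hXint : Integrable X μ)
    (α : ℝ) (hα0 : 0 < α) (hα1 : α < 1) :
    (⨅ η : ℝ, ((1 / α) * ∫ ω, max (η - X ω) 0 ∂μ - η))
      = (1 / α) * ∫ γ in Set.Ioo (0 : ℝ) α,
          sInf {c : ℝ | (μ {ω | X ω + c < 0}).toReal ≤ γ} := by
  set qa := q μ X α with hqa
  set Φ : ℝ → ℝ := fun η => ∫ ω, max (η - X ω) 0 ∂μ with hΦ
  -- rewrite VaR integrand as -q
  have hVaR : ∀ γ ∈ Set.Ioo (0:ℝ) α,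
      sInf {c : ℝ | (μ {ω | X ω + c < 0}).toReal ≤ γ} = -(q μ X γ) := by
    intro γ hγ
    have hneg : -{c : ℝ | (μ {ω | X ω + c < 0}).toReal ≤ γ} = {t : ℝ | F μ X t ≤ γ} := by
      ext t
      simp only [Set.mem_neg, Set.mem_setOf_eq, F]
      have : {ω | X ω + -t < 0} = {ω | X ω < t} := by
        ext ω; simp only [Set.mem_setOf_eq]; constructor <;> intro h <;> linarith
      rw [this]
    rw [Real.sInf_def, hneg, q]
  have hcongr : ∫ γ in Set.Ioo (0:ℝ) α, sInf {c : ℝ | (μ {ω | X ω + c < 0}).toReal ≤ γ}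
      = ∫ γ in Set.Ioo (0:ℝ) α, -(q μ X γ) :=
    setIntegral_congr_fun measurableSet_Ioo hVaR
  -- a.e. facts on (0, α)
  have hqle : ∀ γ ∈ Ioo (0:ℝ) α, q μ X γ ≤ qa :=
    fun γ hγ => q_mono μ hXint hX hγ.1 hα1 hγ.2.le
  have hqae : AEMeasurable (q μ X) (volume.restrict (Ioo 0 α)) :=
    aemeasurable_restrict_of_monotoneOn measurableSet_Ioo
      (fun γ₁ h1 γ₂ h2 h12 => q_mono μ hXint hX h1.1 (lt_trans h2.2 hα1) h12)
  have hnn : ∀ᵐ γ ∂(volume.restrict (Ioo 0 α)), 0 ≤ qa - q μ X γ := by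
    filter_upwards [ae_restrict_mem measurableSet_Ioo] with γ hγ
    linarith [hqle γ hγ]
  -- integrability of qa - q
  have hD : Integrable (fun γ => qa - q μ X γ) (volume.restrict (Ioo 0 α)) := by
    refine ⟨(aemeasurable_const.sub hqae).aestronglyMeasurable, ?_⟩
    rw [hasFiniteIntegral_iff_norm]
    have heq : ∫⁻ γ in Ioo 0 α, ENNReal.ofReal ‖qa - q μ X γ‖
        = ∫⁻ γ in Ioo 0 α, ENNReal.ofReal (qa - q μ X γ) := by
      refine lintegral_congr_ae (hnn.mono fun γ h => ?_)
      dsimp only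
      rw [norm_of_nonneg h]
    rw [heq, fubini μ hX hXint hα0 hα1]
    exact lintegral_lt_top μ hX hXint qa
  -- value of ∫ (qa - q)
  have hval : ∫ γ in Ioo (0:ℝ) α, (qa - q μ X γ) = Φ qa := by
    rw [integral_eq_lintegral_of_nonneg_ae hnn hD.aestronglyMeasurable,
      fubini μ hX hXint hα0 hα1, ← layercake μ hX qa, hΦ]
    exact (integral_eq_lintegral_of_nonneg_ae (f := fun ω => max (qa - X ω) 0)
      (Filter.Eventually.of_forall fun ω => le_max_right _ _)
      (maxint μ hXint qa).aestronglyMeasurable).symm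
  -- integral of q
  have hqint : Integrable (q μ X) (volume.restrict (Ioo 0 α)) := by
    have h1 : Integrable (fun γ => qa - (qa - q μ X γ)) (volume.restrict (Ioo 0 α)) :=
      (integrable_const qa).sub hD
    refine h1.congr (Filter.Eventually.of_forall fun γ => by ring)
  have hconst : ∫ _ in Ioo (0:ℝ) α, qa = α * qa := by
    rw [setIntegral_const, measureReal_def, Real.volume_Ioo, sub_zero, ENNReal.toReal_ofReal hα0.le, smul_eq_mul]
  have hqval : ∫ γ in Ioo (0:ℝ) α, q μ X γ = α * qa - Φ qa := by
    have h2 : ∫ γ in Ioo (0:ℝ) α, (qa - q μ X γ)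
        = (∫ _ in Ioo (0:ℝ) α, qa) - ∫ γ in Ioo (0:ℝ) α, q μ X γ :=
      integral_sub (integrable_const qa) hqint
    rw [hval, hconst] at h2
    linarith
  -- minimality
  have hlow : ∀ η : ℝ, (1/α) * Φ qa - qa ≤ (1/α) * Φ η - η := by
    intro η
    have h1 := phi_min μ hX hXint hα0 hα1 η
    have h2 : (1/α) * (Φ qa + α * (η - qa)) ≤ (1/α) * Φ η :=
      mul_le_mul_of_nonneg_left h1 (by positivity)
    have h3 : (1/α) * (Φ qa + α * (η - qa)) = (1/α) * Φ qa + (η - qa) := by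
      field_simp
    linarith
  have hinf : (⨅ η : ℝ, ((1 / α) * ∫ ω, max (η - X ω) 0 ∂μ - η)) = (1/α) * Φ qa - qa := by
    refine le_antisymm ?_ (le_ciInf hlow)
    exact ciInf_le ⟨(1/α) * Φ qa - qa, by rintro x ⟨η, rfl⟩; exact hlow η⟩ qa
  rw [hinf, hcongr, integral_neg, hqval]
  field_simp
  ring
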